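/- Let g : ℝ → ℂⁿ be continuously differentiable and A : ℝ → Matrix n n ℂ continuous, and set f(t) = g'(t) + A(t) g(t). Let u solve u' + Au = -f with u(T) = 0. Then u(t) = -g(t) + V(t) g(T) where V solves V' + AV = 0, V(T) = Id; in particular u(0) = V(0) g(T) - g(0). -/

import Mathlib

open Matrix

/-- Ray transform of a potential: if `f = g' + A g` and `u` solves
`u' + A u = -f`, `u T = 0`, and `V` solves `V' + A V = 0`, `V T = 1`, then
`u t = -g t + V t *ᵥ g T`; in particular `u 0 = V 0 *ᵥ g T - g 0`. -/
theorem stmt4 {n : Type*} [Fintype n] [DecidableEq n]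
    (A V : ℝ → Matrix n n ℂ) (g g' u f : ℝ → n → ℂ) (T : ℝ)
    (hA : Continuous A) (hg' : Continuous g')
    (hg : ∀ t, HasDerivAt g (g' t) t)
    (hfdef : ∀ t, f t = g' t + A t *ᵥ g t)
    (hu : ∀ t, HasDerivAt u (-(A t *ᵥ u t) - f t) t)
    (huT : u T = 0)
    (hV : ∀ t i j, HasDerivAt (fun s => V s i j) ((-(A t) * V t) i j) t)
    (hVT : V T = 1) :
    (∀ t, u t = -g t + V t *ᵥ g T) ∧ u 0 = V 0 *ᵥ g T - g 0 := by
  set c : n → ℂ := g T with hc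
  set w : ℝ → n → ℂ := fun s => u s + g s - V s *ᵥ c with hwdef
  -- derivative of s ↦ V s *ᵥ c
  have hVc : ∀ s, HasDerivAt (fun r => V r *ᵥ c) ((-(A s) * V s) *ᵥ c) s := by
    intro s
    rw [hasDerivAt_pi]
    intro i
    have : HasDerivAt (fun r => ∑ j, V r i j * c j)
        (∑ j, (-(A s) * V s) i j * c j) s :=
      HasDerivAt.fun_sum fun j _ => (hV s i j).mul_const (c j)
    simpa [Matrix.mulVec, dotProduct] using this
  have hw : ∀ s, HasDerivAt w (-(A s *ᵥ w s)) s := by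
    intro s
    have h := ((hu s).add (hg s)).sub (hVc s)
    refine h.congr_deriv ?_
    rw [hfdef]
    simp only [hwdef, Matrix.neg_mul, Matrix.neg_mulVec, ← Matrix.mulVec_mulVec,
      Matrix.mulVec_add, Matrix.mulVec_sub]
    abel
  have key : ∀ t₀, w t₀ = 0 := by
    intro t₀
    set a : ℝ := min T t₀ - 1 with ha
    set b : ℝ := max T t₀ + 1 with hb
    have hab : a ≤ b := by
      have : min T t₀ ≤ max T t₀ := le_trans (min_le_left _ _) (le_max_left _ _)
      simp only [ha, hb]; linarith
    have hT : T ∈ Set.Ioo a b := by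
      constructor
      · have := min_le_left T t₀; simp only [ha]; linarith
      · have := le_max_left T t₀; simp only [hb]; linarith
    have ht₀ : t₀ ∈ Set.Icc a b := by
      constructor
      · have := min_le_right T t₀; simp only [ha]; linarith
      · have := le_max_right T t₀; simp only [hb]; linarith
    -- clamp function
    set cl : ℝ → ℝ := fun s => max a (min s b) with hcl
    have hclmem : ∀ s, cl s ∈ Set.Icc a b :=
      fun s => ⟨le_max_left _ _, max_le hab (min_le_right _ _)⟩
    have hcleq : ∀ s ∈ Set.Icc a b, cl s = s := by
      intro s hs
      simp only [hcl, min_eq_left hs.2, max_eq_right hs.1]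
    -- the bundled linear vector field
    set M : Matrix n n ℂ →ₗ[ℂ] ((n → ℂ) →L[ℂ] (n → ℂ)) :=
      { toFun := fun B => LinearMap.toContinuousLinearMap B.mulVecLin,
        map_add' := by
          intro B1 B2; ext1 x
          simp [LinearMap.coe_toContinuousLinearMap', Matrix.add_mulVec]
        map_smul' := by
          intro r B; ext1 x
          simp [LinearMap.coe_toContinuousLinearMap', Matrix.smul_mulVec] } with hM
    set L : ℝ → ((n → ℂ) →L[ℂ] (n → ℂ)) := fun s => M (-(A (cl s))) with hL
    have hMcont : Continuous M := M.continuous_of_finiteDimensional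
    have hLcont : Continuous L := by
      apply hMcont.comp
      exact (hA.comp (continuous_const.max (continuous_id.min continuous_const))).neg
    obtain ⟨C, hC⟩ :=
      (isCompact_Icc (a := a) (b := b)).exists_bound_of_continuousOn
        (hLcont.continuousOn (s := Set.Icc a b))
    have hC' : ∀ s, ‖L s‖ ≤ C := by
      intro s
      have h1 : cl (cl s) = cl s := hcleq _ (hclmem s)
      have h2 := hC (cl s) (hclmem s)
      have h3 : L (cl s) = L s := by rw [hL]; simp only [h1]
      rwa [h3] at h2
    have hC0 : 0 ≤ C := le_trans (norm_nonneg _) (hC' 0)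
    set K : NNReal := ⟨C, hC0⟩ with hK
    have hlip : ∀ s, LipschitzWith K (fun x => L s x) := by
      intro s
      refine (L s).lipschitz.weaken ?_
      rw [← NNReal.coe_le_coe]
      exact hC' s
    have hLapp : ∀ s ∈ Set.Icc a b, ∀ x, L s x = -(A s *ᵥ x) := by
      intro s hs x
      simp [hL, hM, hcleq s hs, Matrix.neg_mulVec]
    have hwc : ContinuousOn w (Set.Icc a b) :=
      (continuous_iff_continuousAt.2 fun s => (hw s).continuousAt).continuousOn
    have heq : Set.EqOn w (fun _ => (0 : n → ℂ)) (Set.Icc a b) := by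
      apply ODE_solution_unique_of_mem_Icc (v := fun s x => L s x)
        (s := fun _ => Set.univ) (K := K)
        (fun s _ => (hlip s).lipschitzOnWith) hT hwc
      · intro s hs
        have := hw s
        rwa [← hLapp s (Set.Ioo_subset_Icc_self hs) (w s)] at this
      · exact fun _ _ => Set.mem_univ _
      · exact continuousOn_const
      · intro s hs
        have : L s 0 = 0 := (L s).map_zero
        simpa [this] using (hasDerivAt_const s (0 : n → ℂ))
      · exact fun _ _ => Set.mem_univ _
      · simp [hwdef, huT, hVT, Matrix.one_mulVec, hc]
    have := heq ht₀
    simpa using this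
  have main : ∀ t, u t = -g t + V t *ᵥ c := by
    intro t
    have h := key t
    have : u t + g t - V t *ᵥ c = 0 := h
    have h2 : u t + g t = V t *ᵥ c := by
      rwa [sub_eq_zero] at this
    linear_combination (norm := module) h2
  exact ⟨main, by rw [main 0]; module⟩
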